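/- arXiv:1506.07817 — 2 statements merged into one kernel-verified Lean document; each statement's English description precedes it below -/
import Mathlib

section
/- Let p ≥ 2 be a prime number and let Z_p be the cyclic group of order p. The adjacency spectrum of the strong power graph P_s(Z_p) consists of the eigenvalue 0 with multiplicity 1, the eigenvalue -1 with multiplicity p-2, and the eigenvalue p-2 with multiplicity 1. -/
/-- The strong power graph of the cyclic group `ZMod n` (written additively):
two distinct vertices `x` and `y` are adjacent iff `a • x = b • y` for some
positive integers `a, b < n`. -/
def strongPowerGraphZ (n : ℕ) : SimpleGraph (ZMod n) where
  Adj x y := x ≠ y ∧ ∃ a b : ℕ, 0 < a ∧ a < n ∧ 0 < b ∧ b < n ∧ a • x = b • y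
  symm := by
    constructor
    rintro x y ⟨h, a, b, ha, ha', hb, hb', hab⟩
    exact ⟨h.symm, b, a, hb, hb', ha, ha', hab.symm⟩
  loopless := by
    constructor
    rintro x ⟨h, -⟩
    exact h rfl

/-- The distance matrix (with real entries) of the strong power graph of `ZMod n`. -/
noncomputable def distMatrixZ (n : ℕ) [NeZero n] : Matrix (ZMod n) (ZMod n) ℝ :=
  Matrix.of fun i j => ((strongPowerGraphZ n).dist i j : ℝ)

open Classical in
/-- The adjacency matrix (with real entries) of the strong power graph of `ZMod n`. -/
noncomputable def adjMatrixZ (n : ℕ) [NeZero n] : Matrix (ZMod n) (ZMod n) ℝ :=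
  Matrix.of fun i j => if (strongPowerGraphZ n).Adj i j then 1 else 0

open Matrix Polynomial

lemma strongPowerGraphZ_adj_iff (p : ℕ) [NeZero p] (hp : p.Prime) (x y : ZMod p) :
    (strongPowerGraphZ p).Adj x y ↔ x ≠ y ∧ x ≠ 0 ∧ y ≠ 0 := by
  haveI := Fact.mk hp
  constructor
  · rintro ⟨hxy, a, b, ha, ha', hb, hb', hab⟩
    refine ⟨hxy, ?_, ?_⟩
    · rintro rfl
      rw [smul_zero] at hab
      have hb0 : (b : ZMod p) ≠ 0 := by
        rw [Ne, ZMod.natCast_eq_zero_iff]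
        intro h
        exact absurd (Nat.le_of_dvd hb h) (not_le.mpr hb')
      rw [nsmul_eq_mul] at hab
      have : y = 0 := by
        rcases mul_eq_zero.mp hab.symm with h | h
        · exact absurd h hb0
        · exact h
      exact hxy this.symm
    · rintro rfl
      rw [smul_zero] at hab
      have ha0 : (a : ZMod p) ≠ 0 := by
        rw [Ne, ZMod.natCast_eq_zero_iff]
        intro h
        exact absurd (Nat.le_of_dvd ha h) (not_le.mpr ha')
      rw [nsmul_eq_mul] at hab
      have : x = 0 := by
        rcases mul_eq_zero.mp hab with h | h
        · exact absurd h ha0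
        · exact h
      exact hxy this
  · rintro ⟨hxy, hx, hy⟩
    refine ⟨hxy, (y * x⁻¹).val, 1, ?_, ZMod.val_lt _, one_pos, hp.one_lt, ?_⟩
    · have : y * x⁻¹ ≠ 0 := mul_ne_zero hy (inv_ne_zero hx)
      rw [Nat.pos_iff_ne_zero, Ne, ZMod.val_eq_zero]
      exact this
    · rw [nsmul_eq_mul, nsmul_eq_mul, Nat.cast_one, one_mul, ZMod.natCast_val, ZMod.cast_id,
        mul_assoc, inv_mul_cancel₀ hx, mul_one]

noncomputable def uvec (p : ℕ) : ZMod p → ℝ := fun i => if i = 0 then 0 else 1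

lemma eval_charpoly' {n : Type*} [Fintype n] [DecidableEq n] (M : Matrix n n ℝ) (x : ℝ) :
    M.charpoly.eval x = (x • (1 : Matrix n n ℝ) - M).det := by
  rw [Matrix.charpoly, ← Polynomial.coe_evalRingHom, RingHom.map_det]
  congr 1
  ext i j
  by_cases h : i = j
  · subst h
    simp [charmatrix_apply_eq, Matrix.one_apply_eq]
  · simp [charmatrix_apply_ne _ _ _ h, Matrix.one_apply_ne h]

lemma det_key (p : ℕ) [NeZero p] (x : ℝ) (hx : x ≠ 0) (hx1 : x + 1 ≠ 0) :
    (Matrix.diagonal (fun i => x + uvec p i)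
        - Matrix.replicateCol Unit (uvec p) * Matrix.replicateRow Unit (uvec p)).det
      = (x * (x + 1) ^ (Fintype.card (ZMod p) - 1))
          * (1 - (Fintype.card (ZMod p) - 1 : ℝ) * (x + 1)⁻¹) := by
  set u := uvec p
  set d : ZMod p → ℝ := fun i => x + u i with hd
  have hdne : ∀ i, d i ≠ 0 := by
    intro i
    by_cases h : i = 0 <;> simp [hd, u, uvec, h, hx, hx1]
  set v : ZMod p → ℝ := fun i => -(u i / d i) with hv
  have key : Matrix.diagonal d - Matrix.replicateCol Unit u * Matrix.replicateRow Unit u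
      = Matrix.diagonal d * (1 + Matrix.replicateCol Unit v * Matrix.replicateRow Unit u) := by
    ext i j
    simp only [Matrix.sub_apply, Matrix.diagonal_mul, Matrix.add_apply, Matrix.mul_apply,
      Fintype.sum_unique, Matrix.replicateCol_apply, Matrix.replicateRow_apply, Matrix.diagonal_apply,
      Matrix.one_apply]
    by_cases h : i = j <;> by_cases hi : i = 0 <;> by_cases hj : j = 0 <;>
      simp only [h, hv, hd, u, uvec, hi, if_pos, if_true, if_false, eq_self_iff_true] <;>
      simp [h, hi, hj, Ne.symm] <;> field_simp <;> ring
  rw [key, Matrix.det_mul, Matrix.det_diagonal, Matrix.det_one_add_replicateCol_mul_replicateRow]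
  have hprod : ∏ i, d i = x * (x + 1) ^ (Fintype.card (ZMod p) - 1) := by
    rw [← Finset.mul_prod_erase Finset.univ d (Finset.mem_univ 0)]
    have h0 : d 0 = x := by simp [hd, u, uvec]
    have hc : ∀ i ∈ Finset.univ.erase (0 : ZMod p), d i = x + 1 := fun i hi => by
      simp [hd, u, uvec, Finset.ne_of_mem_erase hi]
    have hrest : ∏ i ∈ Finset.univ.erase 0, d i = (x + 1) ^ (Fintype.card (ZMod p) - 1) := by
      rw [Finset.prod_congr rfl hc, Finset.prod_const,
        Finset.card_erase_of_mem (Finset.mem_univ 0), Finset.card_univ]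
    rw [h0, hrest]
  have hdot : u ⬝ᵥ v = -((Fintype.card (ZMod p) - 1 : ℝ) * (x + 1)⁻¹) := by
    rw [dotProduct]
    rw [← Finset.add_sum_erase Finset.univ _ (Finset.mem_univ 0)]
    have h0 : u 0 * v 0 = 0 := by simp [u, uvec]
    have hc : ∀ i ∈ Finset.univ.erase (0 : ZMod p), u i * v i = -(x + 1)⁻¹ := fun i hi => by
      have hine : i ≠ 0 := Finset.ne_of_mem_erase hi
      simp [hv, hd, u, uvec, hine, div_eq_mul_inv]
    have hrest : ∑ i ∈ Finset.univ.erase 0, u i * v i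
        = -((Fintype.card (ZMod p) - 1 : ℝ) * (x + 1)⁻¹) := by
      rw [Finset.sum_congr rfl hc, Finset.sum_const,
        Finset.card_erase_of_mem (Finset.mem_univ 0), Finset.card_univ, nsmul_eq_mul]
      have h1 : (1 : ℕ) ≤ Fintype.card (ZMod p) := Fintype.card_pos
      push_cast [Nat.cast_sub h1]
      ring
    rw [h0, hrest, zero_add]
  rw [hprod, hdot]
  ring

/-- For a prime `p`, the adjacency spectrum of the strong power graph of `ZMod p` consists
of the eigenvalue `0` with multiplicity `1`, the eigenvalue `-1` with multiplicity `p-2`,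
and the eigenvalue `p-2` with multiplicity `1`. -/
theorem adjMatrixZ_roots_prime (p : ℕ) [NeZero p] (hp : p.Prime) :
    (adjMatrixZ p).charpoly.roots =
      {(0 : ℝ), (p : ℝ) - 2} + Multiset.replicate (p - 2) (-1) := by
  classical
  set u := uvec p with hu
  -- Step 1: the matrix identity
  have hM : adjMatrixZ p = Matrix.replicateCol Unit u * Matrix.replicateRow Unit u - Matrix.diagonal u := by
    ext i j
    rw [adjMatrixZ]
    simp only [Matrix.of_apply, Matrix.sub_apply, Matrix.mul_apply, Fintype.sum_unique,
      Matrix.replicateCol_apply, Matrix.replicateRow_apply, Matrix.diagonal_apply]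
    rw [if_congr (strongPowerGraphZ_adj_iff p hp i j) rfl rfl]
    by_cases h : i = j <;> by_cases hi : i = 0 <;> by_cases hj : j = 0 <;>
      simp [hu, uvec, h, hi, hj]
  -- the target polynomial
  set Q : ℝ[X] := X * (X - C ((p : ℝ) - 2)) * (X + 1) ^ (p - 2) with hQ
  have hcard : Fintype.card (ZMod p) = p := ZMod.card p
  have hp2 : 2 ≤ p := hp.two_le
  -- Step 2: charpoly = Q
  have hcp : (adjMatrixZ p).charpoly = Q := by
    apply Polynomial.eq_of_infinite_eval_eq
    apply Set.Infinite.mono (s := ({(0 : ℝ), -1} : Set ℝ)ᶜ)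
    swap
    · exact Set.Finite.infinite_compl (by simp)
    intro x hxmem
    simp only [Set.mem_compl_iff, Set.mem_insert_iff, Set.mem_singleton_iff, not_or] at hxmem
    obtain ⟨hx, hxm1⟩ := hxmem
    have hx1 : x + 1 ≠ 0 := by
      intro h
      apply hxm1
      linarith
    simp only [Set.mem_setOf_eq]
    have hsm : x • (1 : Matrix (ZMod p) (ZMod p) ℝ) - adjMatrixZ p
        = Matrix.diagonal (fun i => x + u i) - Matrix.replicateCol Unit u * Matrix.replicateRow Unit u := by
      rw [hM]
      ext i j
      by_cases h : i = j <;>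
        simp [Matrix.one_apply, Matrix.diagonal_apply, h, sub_sub_eq_add_sub, add_comm]
    rw [eval_charpoly' (adjMatrixZ p) x, hsm, det_key p x hx hx1, hcard]
    have hps : p - 1 = (p - 2) + 1 := by omega
    have hcast : ((p - 2 : ℕ) : ℝ) = (p : ℝ) - 2 := by
      push_cast [Nat.cast_sub hp2]
      ring
    have hcast1 : ((p : ℝ) - 1) = ((p : ℝ) - 2) + 1 := by ring
    rw [hQ]
    simp only [eval_mul, eval_pow, eval_add, eval_sub, eval_X, eval_C, eval_one]
    rw [hps, pow_succ]
    field_simp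
    ring
  -- Step 3: compute the roots of Q
  rw [hcp, hQ]
  have hX1 : (X + 1 : ℝ[X]) = X - C (-1) := by
    rw [Polynomial.C_neg, Polynomial.C_1, sub_neg_eq_add]
  have hne0 : (X : ℝ[X]) ≠ 0 := X_ne_zero
  have hne1 : (X - C ((p : ℝ) - 2) : ℝ[X]) ≠ 0 := X_sub_C_ne_zero _
  have hne2 : ((X + 1 : ℝ[X]) ^ (p - 2)) ≠ 0 := by
    rw [hX1]; exact pow_ne_zero _ (X_sub_C_ne_zero _)
  rw [Polynomial.roots_mul (mul_ne_zero (mul_ne_zero hne0 hne1) hne2),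
    Polynomial.roots_mul (mul_ne_zero hne0 hne1), Polynomial.roots_X,
    Polynomial.roots_X_sub_C, hX1, Polynomial.roots_pow, Polynomial.roots_X_sub_C,
    Multiset.nsmul_singleton]
  rfl
end

section
/- Let n be a composite number and let Z_n be the cyclic group of order n. The adjacency spectral radius of the strong power graph P_s(Z_n), i.e., the largest root of the characteristic polynomial of its adjacency matrix, equals (n - 3 + 2cos(θ/3)·√(n^2 - 3φ(n)))/3, where 0 < θ < π/2 and θ = arccos( (2n^3 + 27φ(n)^2 + 27φ(n) - 36nφ(n)) / (2√((n^2 - 3φ(n))^3)) ), with φ Euler's totient function. -/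
/-! ### Auxiliary real-analysis lemmas -/

lemma spg_keyE (x u : ℝ) (hx : 4 ≤ x) (hu2 : 2 ≤ u) (hu : u ≤ x - 2) :
    (2*x^3 + 27*u^2 + 27*u - 36*x*u)^2 < 4*(x^2-3*u)^3 := by
  nlinarith [sq_nonneg (x-u), sq_nonneg (x-2*u), sq_nonneg (u-2), sq_nonneg (x - u - 2),
    mul_nonneg (sub_nonneg.2 hu2) (by linarith : (0:ℝ) ≤ x - 2 - u),
    sq_nonneg (x*u - 3*u), sq_nonneg (x^2 - 3*u),
    mul_nonneg (mul_nonneg (by linarith : (0:ℝ) ≤ u - 2) (by linarith : (0:ℝ) ≤ x - 2 - u))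
      (by linarith : (0:ℝ) ≤ x),
    mul_nonneg (mul_nonneg (by linarith : (0:ℝ) ≤ u - 2) (by linarith : (0:ℝ) ≤ x - 2 - u))
      (by linarith : (0:ℝ) ≤ u),
    mul_pos (by linarith : (0:ℝ) < x) (by linarith : (0:ℝ) < u)]

lemma spg_keyN (x u : ℝ) (hx : 4 ≤ x) (hu2 : 2 ≤ u) (hu : u ≤ x - 2) :
    0 < 2*x^3 + 27*u^2 + 27*u - 36*x*u := by
  nlinarith [sq_nonneg (x - 3*u), sq_nonneg (x-2*u),
    mul_nonneg (by linarith : (0:ℝ) ≤ u - 2) (by linarith : (0:ℝ) ≤ x - 2 - u),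
    sq_nonneg (x - u), mul_pos (by linarith : (0:ℝ) < x) (by linarith : (0:ℝ) < u),
    sq_nonneg (2*x - 3*u)]

lemma spg_keyD (x u : ℝ) (hx : 4 ≤ x) (hu2 : 2 ≤ u) (hu : u ≤ x - 2) :
    0 < x^2 - 3*u := by nlinarith

lemma spg_cubic_root (Dv Nv θ : ℝ) (hD : 0 < Dv)
    (harg1 : 0 < Nv / (2 * Real.sqrt Dv ^ 3)) (harg2 : Nv / (2 * Real.sqrt Dv ^ 3) < 1)
    (hθ : θ = Real.arccos (Nv / (2 * Real.sqrt Dv ^ 3))) :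
    (2 * Real.sqrt Dv * Real.cos (θ/3)) ^ 3
      - 3 * Dv * (2 * Real.sqrt Dv * Real.cos (θ/3)) = Nv := by
  set s := Real.sqrt Dv with hs
  have hs0 : 0 < s := Real.sqrt_pos.2 hD
  have hs2 : s ^ 2 = Dv := Real.sq_sqrt hD.le
  have hcosθ : Real.cos θ = Nv / (2 * s ^ 3) := by
    rw [hθ, Real.cos_arccos (by linarith) harg2.le]
  have h3 : Real.cos θ = 4 * Real.cos (θ/3) ^ 3 - 3 * Real.cos (θ/3) := by
    rw [show θ = 3 * (θ/3) by ring, Real.cos_three_mul]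
    ring_nf
  have hNv : Nv = 2 * s ^ 3 * (4 * Real.cos (θ/3) ^ 3 - 3 * Real.cos (θ/3)) := by
    rw [← h3, hcosθ]
    field_simp
  rw [hNv]
  linear_combination (6 * Real.cos (θ/3) * s) * hs2

lemma spg_cubic_le (Dv Nv θ u : ℝ) (hD : 0 < Dv)
    (harg1 : 0 < Nv / (2 * Real.sqrt Dv ^ 3)) (harg2 : Nv / (2 * Real.sqrt Dv ^ 3) < 1)
    (hθ : θ = Real.arccos (Nv / (2 * Real.sqrt Dv ^ 3)))
    (hu : u ^ 3 - 3 * Dv * u = Nv) :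
    u ≤ 2 * Real.sqrt Dv * Real.cos (θ / 3) := by
  set s := Real.sqrt Dv with hs
  have hs0 : 0 < s := Real.sqrt_pos.2 hD
  have hs2 : s ^ 2 = Dv := Real.sq_sqrt hD.le
  have hθ1 : 0 < θ := by
    rw [hθ]; exact Real.arccos_pos.2 harg2
  have hθ2 : θ < Real.pi / 2 := by
    rw [hθ]; exact Real.arccos_lt_pi_div_two.2 harg1
  have hc : Real.sqrt 3 / 2 < Real.cos (θ / 3) := by
    have h6 : Real.cos (θ/3) > Real.cos (Real.pi/6) := by
      apply Real.cos_lt_cos_of_nonneg_of_le_pi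
      · positivity
      · linarith [Real.pi_pos]
      · linarith
    linarith [Real.cos_pi_div_six]
  set u₀ := 2 * s * Real.cos (θ/3) with hu₀def
  have hroot := spg_cubic_root Dv Nv θ hD harg1 harg2 hθ
  have hu₀root : u₀ ^ 3 - 3 * Dv * u₀ = Nv := by
    rw [hu₀def]; linear_combination hroot
  have hu₀big : u₀ ^ 2 > 3 * Dv := by
    have h1 : u₀ > Real.sqrt 3 * s := by
      rw [hu₀def]
      nlinarith [Real.sqrt_nonneg 3]
    have h3 : Real.sqrt 3 ^ 2 = 3 := Real.sq_sqrt (by norm_num)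
    have hw : 0 < Real.sqrt 3 * s := mul_pos (Real.sqrt_pos.2 (by norm_num)) hs0
    nlinarith [mul_pos (sub_pos.2 h1) (show (0:ℝ) < u₀ + Real.sqrt 3 * s by linarith)]
  have hu₀pos : 0 < u₀ := by
    rw [hu₀def]
    have : 0 < Real.cos (θ/3) := by
      nlinarith [Real.sqrt_nonneg 3, Real.sq_sqrt (show (0:ℝ) ≤ 3 by norm_num)]
    positivity
  show u ≤ 2 * s * Real.cos (θ/3)
  rw [← hu₀def]
  by_contra hlt
  push_neg at hlt
  have key : u ^ 3 - 3 * Dv * u > u₀ ^ 3 - 3 * Dv * u₀ := by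
    have h1 : u - u₀ > 0 := by linarith
    have h2 : u ^ 2 + u * u₀ + u₀ ^ 2 - 3 * Dv > 0 := by nlinarith
    nlinarith [mul_pos h1 h2]
  rw [hu, hu₀root] at key
  exact lt_irrefl _ key

/-! ### Charpoly and eigenvalues -/

section CharpolyEigen
variable {m : Type*} [Fintype m] [DecidableEq m]

lemma spg_charpoly_eval_eq (M : Matrix m m ℝ) (x : ℝ) :
    M.charpoly.eval x = (x • (1 : Matrix m m ℝ) - M).det := by
  have h := RingHom.map_det (Polynomial.evalRingHom x) (Matrix.charmatrix M)
  rw [Matrix.charpoly]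
  have heq : (Matrix.charmatrix M).map (Polynomial.evalRingHom x) = x • 1 - M := by
    ext i j
    by_cases hij : i = j
    · subst hij
      simp [Matrix.charmatrix_apply, Matrix.one_apply]
    · simp [Matrix.charmatrix_apply, Matrix.one_apply, hij, Matrix.diagonal_apply_ne _ hij]
  rw [show Polynomial.eval x (Matrix.charmatrix M).det
      = (Polynomial.evalRingHom x) (Matrix.charmatrix M).det from rfl, h,
    show (Polynomial.evalRingHom x).mapMatrix (Matrix.charmatrix M)
      = (Matrix.charmatrix M).map (Polynomial.evalRingHom x) from rfl, heq]

lemma spg_charpoly_root_iff_eigen (M : Matrix m m ℝ) (x : ℝ) :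
    M.charpoly.eval x = 0 ↔ ∃ v : m → ℝ, v ≠ 0 ∧ M.mulVec v = x • v := by
  rw [spg_charpoly_eval_eq, ← Matrix.exists_mulVec_eq_zero_iff]
  constructor
  · rintro ⟨v, hv, hmv⟩
    refine ⟨v, hv, ?_⟩
    rwa [Matrix.sub_mulVec, Matrix.smul_mulVec, Matrix.one_mulVec, sub_eq_zero,
      eq_comm] at hmv
  · rintro ⟨v, hv, hmv⟩
    refine ⟨v, hv, ?_⟩
    rw [Matrix.sub_mulVec, Matrix.smul_mulVec, Matrix.one_mulVec, sub_eq_zero, hmv]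

end CharpolyEigen

/-! ### Structure of the strong power graph of `ZMod n` -/

section Graph
variable (n : ℕ) [NeZero n]

lemma spg_annih (z : ZMod n) (hu : ¬ IsUnit z) :
    ∃ b : ℕ, 0 < b ∧ b < n ∧ b • z = 0 := by
  have hn : 0 < n := Nat.pos_of_ne_zero (NeZero.ne n)
  set d := Nat.gcd z.val n with hd
  have hdn : d ∣ n := Nat.gcd_dvd_right _ _
  have hdz : d ∣ z.val := Nat.gcd_dvd_left _ _
  have hd1 : 1 < d := by
    rcases Nat.lt_or_ge d 2 with h | h
    · interval_cases d
      · exact absurd (Nat.eq_zero_of_gcd_eq_zero_right hd.symm) hn.ne'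
      · exact absurd (by rw [← ZMod.natCast_rightInverse z, ZMod.isUnit_iff_coprime]; exact hd.symm) hu
    · exact h
  refine ⟨n / d, Nat.div_pos (Nat.le_of_dvd hn hdn) (by omega), ?_, ?_⟩
  · exact Nat.div_lt_self hn hd1
  · have : ((n / d) : ZMod n) * (z.val : ZMod n) = 0 := by
      rw [← Nat.cast_mul, ZMod.natCast_eq_zero_iff]
      obtain ⟨k, hk⟩ := hdz
      rw [hk, ← mul_assoc, Nat.div_mul_cancel hdn]
      exact dvd_mul_right n k
    rw [nsmul_eq_mul, ← ZMod.natCast_rightInverse z]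
    exact this

lemma spg_not_adj_zero_unit (x y : ZMod n) (hx : x = 0) (hy : IsUnit y) :
    ¬ (strongPowerGraphZ n).Adj x y := by
  rintro ⟨-, a, b, ha, ha', hb, hb', hab⟩
  subst hx
  rw [smul_zero, nsmul_eq_mul] at hab
  have : (b : ZMod n) = 0 := by
    rcases hy with ⟨u, rfl⟩
    have h2 := congrArg (· * ((u⁻¹ : (ZMod n)ˣ) : ZMod n)) hab.symm
    simpa using h2
  rw [ZMod.natCast_eq_zero_iff] at this
  exact absurd (Nat.le_of_dvd hb this) (by omega)

lemma spg_adj_iff (hn : 2 ≤ n) (x y : ZMod n) :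
    (strongPowerGraphZ n).Adj x y ↔
      x ≠ y ∧ ¬(x = 0 ∧ IsUnit y) ∧ ¬(y = 0 ∧ IsUnit x) := by
  constructor
  · intro h
    refine ⟨h.1, ?_, ?_⟩
    · rintro ⟨hx, hy⟩; exact spg_not_adj_zero_unit n x y hx hy h
    · rintro ⟨hy, hx⟩; exact spg_not_adj_zero_unit n y x hy hx h.symm
  · rintro ⟨hxy, h1, h2⟩
    refine ⟨hxy, ?_⟩
    by_cases hx0 : x = 0
    · have hyu : ¬ IsUnit y := fun h => h1 ⟨hx0, h⟩
      obtain ⟨b, hb, hb', hby⟩ := spg_annih n y hyu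
      exact ⟨1, b, one_pos, hn, hb, hb', by rw [hx0, smul_zero, hby]⟩
    by_cases hy0 : y = 0
    · have hxu : ¬ IsUnit x := fun h => h2 ⟨hy0, h⟩
      obtain ⟨a, ha, ha', hax⟩ := spg_annih n x hxu
      exact ⟨a, 1, ha, ha', one_pos, hn, by rw [hy0, smul_zero, hax]⟩
    by_cases hyu : IsUnit y
    · rcases hyu with ⟨u, rfl⟩
      refine ⟨1, (x * (↑u⁻¹ : (ZMod n)ˣ)).val, one_pos, hn, ?_, ZMod.val_lt _, ?_⟩
      · have hne : (x * (↑u⁻¹ : (ZMod n)ˣ)).val ≠ 0 := by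
          rw [Ne, ZMod.val_eq_zero]
          intro h
          apply hx0
          simpa using congrArg (· * (u : ZMod n)) h
        omega
      · rw [one_smul, nsmul_eq_mul, ZMod.natCast_rightInverse]
        rw [mul_assoc]
        simp
    by_cases hxu : IsUnit x
    · rcases hxu with ⟨u, rfl⟩
      refine ⟨(y * (↑u⁻¹ : (ZMod n)ˣ)).val, 1, ?_, ZMod.val_lt _, one_pos, hn, ?_⟩
      · have hne : (y * (↑u⁻¹ : (ZMod n)ˣ)).val ≠ 0 := by
          rw [Ne, ZMod.val_eq_zero]
          intro h
          apply hy0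
          simpa using congrArg (· * (u : ZMod n)) h
        omega
      · rw [one_smul, nsmul_eq_mul, ZMod.natCast_rightInverse, mul_assoc]
        simp
    · obtain ⟨a, ha, ha', hax⟩ := spg_annih n x hxu
      obtain ⟨b, hb, hb', hby⟩ := spg_annih n y hyu
      exact ⟨a, b, ha, ha', hb, hb', by rw [hax, hby]⟩

lemma zmod_not_isUnit_zero (hn : 2 ≤ n) : ¬ IsUnit (0 : ZMod n) := by
  haveI : Fact (1 < n) := ⟨by omega⟩
  rw [isUnit_zero_iff]
  exact zero_ne_one

open Classical Finset in
lemma adjMatrixZ_apply (hn : 2 ≤ n) (i j : ZMod n) :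
    adjMatrixZ n i j = (if i = j then 0 else 1) -
      (if (i = 0 ∧ IsUnit j) ∨ (j = 0 ∧ IsUnit i) then 1 else 0) := by
  have h0 := zmod_not_isUnit_zero n hn
  rw [adjMatrixZ, Matrix.of_apply, spg_adj_iff n hn]
  by_cases hij : i = j
  · subst hij
    rcases Classical.em (i = 0) with h | h
    · simp [h, h0]
    · simp [h]
  · by_cases hb : (i = 0 ∧ IsUnit j) ∨ (j = 0 ∧ IsUnit i)
    · rcases hb with ⟨h1b, h2b⟩ | ⟨h1b, h2b⟩ <;> subst h1b <;> simp [hij, h2b]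
    · rw [not_or] at hb
      simp [hij, hb.1, hb.2]

open Classical Finset in
lemma adjMatrixZ_mulVec (hn : 2 ≤ n) (v : ZMod n → ℝ) (i : ZMod n) :
    (adjMatrixZ n).mulVec v i =
      (∑ j, v j) - v i -
        (if i = 0 then (∑ j ∈ univ.filter fun z : ZMod n => IsUnit z, v j)
         else if IsUnit i then v 0 else 0) := by
  have h0 := zmod_not_isUnit_zero n hn
  have hrw : (adjMatrixZ n).mulVec v i
      = ∑ j, ((if i = j then 0 else 1) -
          (if (i = 0 ∧ IsUnit j) ∨ (j = 0 ∧ IsUnit i) then 1 else 0)) * v j := by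
    have : (adjMatrixZ n).mulVec v i = ∑ j, adjMatrixZ n i j * v j := rfl
    rw [this]
    exact Finset.sum_congr rfl fun j _ => by rw [adjMatrixZ_apply n hn]
  rw [hrw]
  simp only [sub_mul, Finset.sum_sub_distrib]
  congr 1
  · have h1 : ∀ j : ZMod n, (if i = j then (0:ℝ) else 1) * v j
        = v j - (if j = i then v j else 0) := by
      intro j
      by_cases h : i = j
      · simp [h, eq_comm]
      · rw [if_neg h, if_neg (Ne.symm h)]; ring
    simp only [h1, Finset.sum_sub_distrib, Finset.sum_ite_eq' univ i v, if_pos (mem_univ i)]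
  · by_cases hi0 : i = 0
    · subst hi0
      rw [if_pos rfl, Finset.sum_filter]
      refine Finset.sum_congr rfl fun j _ => ?_
      by_cases hj : IsUnit j
      · simp [hj]
      · simp [hj, h0]
    · rw [if_neg hi0]
      by_cases hiu : IsUnit i
      · rw [if_pos hiu]
        have h2 : ∀ j : ZMod n,
            (if (i = 0 ∧ IsUnit j) ∨ (j = 0 ∧ IsUnit i) then (1:ℝ) else 0) * v j
            = if j = 0 then v j else 0 := by
          intro j
          by_cases hj : j = 0
          · simp [hj, hiu, hi0]
          · simp [hj, hi0]
        rw [Finset.sum_congr rfl fun j _ => h2 j,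
          Finset.sum_ite_eq' univ (0 : ZMod n) v, if_pos (mem_univ _)]
      · rw [if_neg hiu]
        apply Finset.sum_eq_zero
        intro j _
        simp [hi0, hiu]

open Classical Finset in
lemma card_units_filter : ((univ.filter fun z : ZMod n => IsUnit z).card : ℕ) = n.totient := by
  have himg : (univ.filter fun z : ZMod n => IsUnit z)
      = univ.image (fun u : (ZMod n)ˣ => (u : ZMod n)) := by
    ext z
    simp [IsUnit, eq_comm]
  rw [himg, Finset.card_image_of_injective _ Units.val_injective, Finset.card_univ,
    ZMod.card_units_eq_totient]

open Classical Finset in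
lemma zmod_sum_split (hn : 2 ≤ n) (g : ZMod n → ℝ) :
    ∑ j, g j = g 0 + (∑ j ∈ univ.filter fun z : ZMod n => IsUnit z, g j)
      + (∑ j ∈ univ.filter (fun z : ZMod n => ¬ IsUnit z ∧ z ≠ 0), g j) := by
  have h0 := zmod_not_isUnit_zero n hn
  rw [← Finset.sum_filter_add_sum_filter_not univ (fun z : ZMod n => z = 0) g]
  have h1 : univ.filter (fun z : ZMod n => z = 0) = {0} := by ext z; simp
  rw [h1, Finset.sum_singleton,
    ← Finset.sum_filter_add_sum_filter_not (univ.filter fun z : ZMod n => ¬ z = 0)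
      (fun z => IsUnit z) g, Finset.filter_filter, Finset.filter_filter]
  have h2 : (univ.filter fun z : ZMod n => ¬ z = 0 ∧ IsUnit z)
      = univ.filter fun z : ZMod n => IsUnit z := by
    ext z
    simp only [mem_filter, mem_univ, true_and, and_iff_right_iff_imp]
    intro hz hz0
    exact h0 (hz0 ▸ hz)
  have h3 : (univ.filter fun z : ZMod n => ¬ z = 0 ∧ ¬ IsUnit z)
      = univ.filter fun z : ZMod n => ¬ IsUnit z ∧ z ≠ 0 := by
    ext z
    simp [and_comm]
  rw [h2, h3, add_assoc]

open Classical Finset in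
lemma card_nonunits_filter (hn : 2 ≤ n) :
    (((univ.filter (fun z : ZMod n => ¬ IsUnit z ∧ z ≠ 0)).card) : ℝ)
      = (n : ℝ) - 1 - (n.totient : ℝ) := by
  have h := zmod_sum_split n hn (fun _ => (1:ℝ))
  simp only [Finset.sum_const, nsmul_eq_mul, mul_one, Finset.card_univ, ZMod.card] at h
  have hU := card_units_filter n
  rw [hU] at h
  push_cast at h ⊢
  linarith

lemma zmod_exists_nonunit (hn : 2 ≤ n) (hnp : ¬ n.Prime) :
    ∃ z : ZMod n, ¬ IsUnit z ∧ z ≠ 0 := by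
  obtain ⟨d, hdvd, hd2, hdlt⟩ := Nat.exists_dvd_of_not_prime2 hn hnp
  refine ⟨(d : ZMod n), ?_, ?_⟩
  · rw [ZMod.isUnit_iff_coprime]
    intro hco
    have : Nat.gcd d n = d := Nat.gcd_eq_left hdvd
    rw [Nat.Coprime] at hco
    omega
  · intro h
    rw [ZMod.natCast_eq_zero_iff] at h
    have := Nat.le_of_dvd (by omega) h
    omega

end Graph

open Finset

/-- For a composite number `n`, the adjacency spectral radius of the strong power graph of
`ZMod n` (the largest root of the characteristic polynomial of its adjacency matrix) is
`(n-3+2cos(θ/3)√(n²-3φ(n)))/3`, where `0 < θ < π/2` and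
`θ = arccos((2n³+27φ(n)²+27φ(n)-36nφ(n))/(2√((n²-3φ(n))³)))`. -/
theorem adjMatrixZ_spectralRadius (n : ℕ) [NeZero n] (hn : 2 ≤ n) (hnp : ¬ n.Prime)
    (θ : ℝ)
    (hθ : θ = Real.arccos ((2 * (n : ℝ) ^ 3 + 27 * (n.totient : ℝ) ^ 2 + 27 * (n.totient : ℝ)
        - 36 * (n : ℝ) * (n.totient : ℝ)) /
      (2 * Real.sqrt (((n : ℝ) ^ 2 - 3 * (n.totient : ℝ)) ^ 3)))) :
    (0 < θ ∧ θ < Real.pi / 2) ∧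
    IsGreatest {x : ℝ | (adjMatrixZ n).charpoly.eval x = 0}
      (((n : ℝ) - 3 + 2 * Real.cos (θ / 3) *
        Real.sqrt ((n : ℝ) ^ 2 - 3 * (n.totient : ℝ))) / 3) := by
  classical
  -- basic numeric facts
  have hn4 : 4 ≤ n := by
    rcases (show n = 2 ∨ n = 3 ∨ 4 ≤ n by omega) with h | h | h
    · exact absurd (h ▸ Nat.prime_two) hnp
    · exact absurd (h ▸ Nat.prime_three) hnp
    · exact h
  haveI : Fact (1 < n) := ⟨by omega⟩
  have h0u := zmod_not_isUnit_zero n hn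
  have ht2 : 2 ≤ n.totient := by
    have he := Nat.totient_even (show 2 < n by omega)
    have hp : 0 < n.totient := Nat.totient_pos.2 (by omega)
    rcases he with ⟨k, hk⟩
    omega
  have htle : n.totient ≤ n - 2 := by
    have h1 : n.totient < n := Nat.totient_lt n (by omega)
    have h2 : n.totient ≠ n - 1 := by
      intro h
      exact hnp ((Nat.totient_eq_iff_prime (by omega)).1 h)
    omega
  set X : ℝ := (n : ℝ) with hXdef
  set T : ℝ := (n.totient : ℝ) with hTdef
  have hX : (4:ℝ) ≤ X := by rw [hXdef]; exact_mod_cast hn4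
  have hT2 : (2:ℝ) ≤ T := by rw [hTdef]; exact_mod_cast ht2
  have hTle : T ≤ X - 2 := by
    have : (n.totient : ℝ) ≤ ((n - 2 : ℕ) : ℝ) := by exact_mod_cast htle
    rw [Nat.cast_sub (by omega)] at this
    push_cast at this
    linarith
  have hUcard : (((Finset.univ.filter fun z : ZMod n => IsUnit z).card : ℕ) : ℝ) = T := by
    rw [hTdef]; exact_mod_cast card_units_filter n
  have hMcard : (((Finset.univ.filter (fun z : ZMod n => ¬ IsUnit z ∧ z ≠ 0)).card : ℕ) : ℝ)
      = X - 1 - T := by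
    rw [hXdef, hTdef]; exact card_nonunits_filter n hn
  clear_value X T
  have hD : 0 < X^2 - 3*T := spg_keyD X T hX hT2 hTle
  have hNpos : 0 < 2*X^3 + 27*T^2 + 27*T - 36*X*T := spg_keyN X T hX hT2 hTle
  have hE : (2*X^3 + 27*T^2 + 27*T - 36*X*T)^2 < 4*(X^2-3*T)^3 := spg_keyE X T hX hT2 hTle
  have hs0 : 0 < Real.sqrt (X^2 - 3*T) := Real.sqrt_pos.2 hD
  have hs2 : Real.sqrt (X^2 - 3*T) ^ 2 = X^2 - 3*T := Real.sq_sqrt hD.le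
  have hsqrt3 : Real.sqrt ((X^2 - 3*T)^3) = Real.sqrt (X^2 - 3*T) ^ 3 := by
    rw [pow_succ, Real.sqrt_mul (by positivity), Real.sqrt_sq hD.le]
    linear_combination (-Real.sqrt (X^2 - 3*T)) * hs2
  -- the normalized hypotheses for the cubic lemmas
  have hθ' : θ = Real.arccos ((2*X^3 + 27*T^2 + 27*T - 36*X*T)
      / (2 * Real.sqrt (X^2 - 3*T) ^ 3)) := by
    rw [hθ, ← hsqrt3]
  have harg1 : 0 < (2*X^3 + 27*T^2 + 27*T - 36*X*T) / (2 * Real.sqrt (X^2 - 3*T) ^ 3) :=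
    div_pos hNpos (by positivity)
  have harg2 : (2*X^3 + 27*T^2 + 27*T - 36*X*T) / (2 * Real.sqrt (X^2 - 3*T) ^ 3) < 1 := by
    rw [div_lt_one (by positivity)]
    have h6 : (2 * Real.sqrt (X^2-3*T) ^ 3)^2 = 4*(X^2-3*T)^3 := by
      rw [show (2 * Real.sqrt (X^2-3*T) ^ 3)^2 = 4*(Real.sqrt (X^2-3*T)^2)^3 by ring, hs2]
    refine lt_of_pow_lt_pow_left₀ 2 (by positivity) ?_
    rw [h6]
    exact hE
  have hθ1 : 0 < θ := by rw [hθ']; exact Real.arccos_pos.2 harg2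
  have hθ2 : θ < Real.pi / 2 := by rw [hθ']; exact Real.arccos_lt_pi_div_two.2 harg1
  have hcpos : 0 < Real.cos (θ/3) :=
    Real.cos_pos_of_mem_Ioo ⟨by linarith [Real.pi_pos], by linarith [Real.pi_pos]⟩
  -- the spectral radius candidate
  set R : ℝ := ((X - 3 + 2 * Real.cos (θ / 3) * Real.sqrt (X ^ 2 - 3 * T)) / 3) with hRdef
  have hRpos : 0 < R := by
    rw [hRdef]
    have : 0 < 2 * Real.cos (θ/3) * Real.sqrt (X^2-3*T) := by positivity
    linarith
  -- the cubic root fact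
  have hroot := spg_cubic_root (X^2 - 3*T) (2*X^3 + 27*T^2 + 27*T - 36*X*T) θ hD harg1 harg2 hθ'
  have hcube : R^3 - (X-3)*R^2 - (2*X-3-T)*R + (X-1-T)*(T-1) = 0 := by
    rw [hRdef]
    linear_combination (1/27 : ℝ) * hroot
  clear_value R
  obtain ⟨w₀, hw₀u, hw₀0⟩ := zmod_exists_nonunit n hn hnp
  have hw₀mem : w₀ ∈ univ.filter (fun z : ZMod n => ¬ IsUnit z ∧ z ≠ 0) := by
    simp [hw₀u, hw₀0]
  have hM1 : (1:ℝ) ≤ X - 1 - T := by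
    rw [← hMcard]
    exact_mod_cast Finset.card_pos.2 ⟨w₀, hw₀mem⟩
  refine ⟨⟨hθ1, hθ2⟩, ?_, ?_⟩
  · -- membership : R is a root of the characteristic polynomial
    show (adjMatrixZ n).charpoly.eval R = 0
    rw [spg_charpoly_root_iff_eigen]
    set v : ZMod n → ℝ := fun z =>
      if z = 0 then (X-1-T)*(R+1-T) else if IsUnit z then (X-1-T)*R else R*(R+1-T) with hvdef
    have hv0 : v 0 = (X-1-T)*(R+1-T) := by rw [hvdef]; simp
    have hvu : ∀ i : ZMod n, IsUnit i → v i = (X-1-T)*R := by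
      intro i hi
      have hi0 : i ≠ 0 := fun h => h0u (h ▸ hi)
      rw [hvdef]; simp [hi0, hi]
    have hvm : ∀ i : ZMod n, ¬ IsUnit i → i ≠ 0 → v i = R*(R+1-T) := by
      intro i hiu hi0
      rw [hvdef]; simp [hi0, hiu]
    have hSU : (∑ j ∈ univ.filter fun z : ZMod n => IsUnit z, v j) = T * ((X-1-T)*R) := by
      rw [Finset.sum_congr rfl fun j hj => hvu j (Finset.mem_filter.1 hj).2,
        Finset.sum_const, nsmul_eq_mul, hUcard]
    have hSM : (∑ j ∈ univ.filter (fun z : ZMod n => ¬ IsUnit z ∧ z ≠ 0), v j)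
        = (X-1-T) * (R*(R+1-T)) := by
      rw [Finset.sum_congr rfl fun j hj => hvm j (Finset.mem_filter.1 hj).2.1
        (Finset.mem_filter.1 hj).2.2, Finset.sum_const, nsmul_eq_mul, hMcard]
    have hsum : (∑ j, v j) = (X-1-T)*(R+1-T) + T*((X-1-T)*R) + (X-1-T)*(R*(R+1-T)) := by
      rw [zmod_sum_split n hn v, hv0, hSU, hSM]
    refine ⟨v, ?_, ?_⟩
    · intro h
      have h1 : v 1 = 0 := congrFun h 1
      rw [hvu 1 isUnit_one] at h1
      rcases mul_eq_zero.1 h1 with h' | h' <;> linarith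
    · funext i
      rw [adjMatrixZ_mulVec n hn, hsum]
      simp only [Pi.smul_apply, smul_eq_mul]
      by_cases hi0 : i = 0
      · subst hi0
        rw [if_pos rfl, hSU, hv0]
        ring
      · rw [if_neg hi0]
        by_cases hiu : IsUnit i
        · rw [if_pos hiu, hvu i hiu, hv0]
          ring
        · rw [if_neg hiu, hvm i hiu hi0]
          linear_combination (-1 : ℝ) * hcube
  · -- upper bound
    rintro x hx
    rw [Set.mem_setOf_eq, spg_charpoly_root_iff_eigen] at hx
    obtain ⟨v, hvne, hveq⟩ := hx
    show x ≤ R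
    by_cases hx1 : x = -1
    · rw [hx1]; linarith
    have hx1' : x + 1 ≠ 0 := fun h => hx1 (by linarith)
    have heq : ∀ i : ZMod n, (∑ j, v j) - v i -
        (if i = 0 then (∑ j ∈ univ.filter fun z : ZMod n => IsUnit z, v j)
         else if IsUnit i then v 0 else 0) = x * v i := by
      intro i
      have h := congrFun hveq i
      rw [adjMatrixZ_mulVec n hn] at h
      simpa using h
    set Tt := ∑ j, v j with hTtdef
    set a := v 0 with hadef
    set b := (Tt - a)/(x+1) with hbdef
    set cc := Tt/(x+1) with hccdef
    clear_value Tt a b cc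
    have hvu : ∀ i : ZMod n, IsUnit i → v i = b := by
      intro i hi
      have hi0 : i ≠ 0 := fun h => h0u (h ▸ hi)
      have h := heq i
      rw [if_neg hi0, if_pos hi] at h
      rw [hbdef, eq_div_iff hx1']
      linarith
    have hvm : ∀ i : ZMod n, ¬ IsUnit i → i ≠ 0 → v i = cc := by
      intro i hiu hi0
      have h := heq i
      rw [if_neg hi0, if_neg hiu] at h
      rw [hccdef, eq_div_iff hx1']
      linarith
    have hSU : (∑ j ∈ univ.filter fun z : ZMod n => IsUnit z, v j) = T * b := by
      rw [Finset.sum_congr rfl fun j hj => hvu j (Finset.mem_filter.1 hj).2,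
        Finset.sum_const, nsmul_eq_mul, hUcard]
    have hSM : (∑ j ∈ univ.filter (fun z : ZMod n => ¬ IsUnit z ∧ z ≠ 0), v j)
        = (X - 1 - T) * cc := by
      rw [Finset.sum_congr rfl fun j hj => hvm j (Finset.mem_filter.1 hj).2.1
        (Finset.mem_filter.1 hj).2.2, Finset.sum_const, nsmul_eq_mul, hMcard]
    have hTt : Tt = a + T*b + (X-1-T)*cc := by
      rw [hTtdef, zmod_sum_split n hn v, hSU, hSM, hadef]
    have e1 : (X-1-T)*cc = x*a := by
      have h := heq 0
      rw [if_pos rfl, hSU, ← hadef, hTt] at h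
      linarith
    have e2 : (x+1-T)*b = (X-1-T)*cc := by
      have h := heq 1
      have h1u : IsUnit (1 : ZMod n) := isUnit_one
      have h10 : (1 : ZMod n) ≠ 0 := one_ne_zero
      rw [if_neg h10, if_pos h1u, hvu 1 h1u, hTt] at h
      linarith
    have e3 : (x+1-(X-1-T))*cc = a + T*b := by
      have h := heq w₀
      rw [if_neg hw₀0, if_neg hw₀u, hvm w₀ hw₀u hw₀0, hTt] at h
      linarith
    have hccnz : cc ≠ 0 := by
      intro hcc0
      rw [hcc0] at e1 e2 e3
      simp only [mul_zero] at e1 e2 e3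
      -- e1 : 0 = x*a, e2 : (x+1-T)*b = 0, e3 : 0 = a + T*b
      by_cases hb0 : b = 0
      · have ha0 : a = 0 := by rw [hb0] at e3; linarith
        apply hvne
        funext j
        by_cases hj0 : j = 0
        · rw [hj0, ← hadef, ha0]; rfl
        by_cases hju : IsUnit j
        · rw [hvu j hju, hb0]; rfl
        · rw [hvm j hju hj0, hcc0]; rfl
      · have hxT : x + 1 - T = 0 := by
          rcases mul_eq_zero.1 e2 with h | h
          · exact h
          · exact absurd h hb0
        have ha : a = -(T*b) := by linarith
        have hane : a ≠ 0 := by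
          rw [ha]
          intro h
          have : T * b = 0 := by linarith
          rcases mul_eq_zero.1 this with h' | h'
          · linarith
          · exact hb0 h'
        have hx0 : x = 0 := by
          rcases mul_eq_zero.1 e1.symm with h | h
          · exact h
          · exact absurd h hane
        rw [hx0] at hxT
        linarith
    have hfx : x^3 - (X-3)*x^2 - (2*X-3-T)*x + (X-1-T)*(T-1) = 0 := by
      have hfc : (x^3 - (X-3)*x^2 - (2*X-3-T)*x + (X-1-T)*(T-1)) * cc = 0 := by
        linear_combination (x*(x+1-T))*e3 - (x+1-T)*e1 + (T*x)*e2
      exact (mul_eq_zero.1 hfc).resolve_right hccnz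
    have hu : (3*x-(X-3))^3 - 3*(X^2-3*T)*(3*x-(X-3)) = 2*X^3 + 27*T^2 + 27*T - 36*X*T := by
      linear_combination 27 * hfx
    have hle := spg_cubic_le (X^2-3*T) (2*X^3 + 27*T^2 + 27*T - 36*X*T) θ (3*x-(X-3))
      hD harg1 harg2 hθ' hu
    have hco : 2 * Real.sqrt (X^2-3*T) * Real.cos (θ/3)
        = 2 * Real.cos (θ / 3) * Real.sqrt (X ^ 2 - 3 * T) := by ring
    rw [hco] at hle
    rw [hRdef]
    linarith
end
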